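/- Let D be an integral domain with fraction field K, let I be a finitely generated ideal of D, and let x be a nonzero element of K such that x lies in IV for every valuation subring V of K containing D. Then x satisfies an equation x^n + a_1 x^{n-1} + ... + a_n = 0 with a_i in I^i for each i. -/

import Mathlib

/-- The `D`-linear map `d ↦ c * algebraMap D K d`. -/
noncomputable def stmt4.smulAlg (D K : Type*) [CommRing D] [CommRing K] [Algebra D K] (c : K) :
    D →ₗ[D] K where
  toFun d := c * algebraMap D K d
  map_add' a b := by simp [mul_add]
  map_smul' a b := by simp [Algebra.smul_def]; ring

@[simp] lemma stmt4.smulAlg_apply (D K : Type*) [CommRing D] [CommRing K] [Algebra D K]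
    (c : K) (d : D) : stmt4.smulAlg D K c d = c * algebraMap D K d := rfl

theorem stmt4 (D K : Type*) [CommRing D] [IsDomain D] [Field K] [Algebra D K]
    [IsFractionRing D K] (I : Ideal D) (hI : I.FG) (x : K) (hx : x ≠ 0)
    (h : ∀ V : ValuationSubring K, (∀ d : D, algebraMap D K d ∈ V) →
      x ∈ Submodule.span V (algebraMap D K '' (I : Set D))) :
    ∃ n : ℕ, 0 < n ∧ ∃ a : ℕ → D, (∀ i ∈ Finset.Icc 1 n, a i ∈ I ^ i) ∧
      x ^ n + ∑ i ∈ Finset.Icc 1 n, algebraMap D K (a i) * x ^ (n - i) = 0 := by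
  classical
  set φ := algebraMap D K with hφ
  set y := x⁻¹ with hy
  set T : Set K := (fun a => y * φ a) '' (I : Set D) with hT
  set f : ℕ → Submodule D K := fun i => Submodule.map (stmt4.smulAlg D K (y ^ i)) (I ^ i) with hf
  set G : ℕ → Submodule D K := fun n => ⨆ i ∈ Finset.Icc 1 n, f i with hG
  set H : ℕ → Submodule D K := fun n => f 0 ⊔ G n with hH
  -- graded multiplication
  have hfmul : ∀ i j, f i * f j ≤ f (i + j) := by
    intro i j
    rw [Submodule.mul_le]
    rintro a ⟨b1, hb1, rfl⟩ c ⟨b2, hb2, rfl⟩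
    refine Submodule.mem_map.mpr ⟨b1 * b2, (pow_add I i j) ▸ Ideal.mul_mem_mul hb1 hb2, ?_⟩
    simp only [stmt4.smulAlg_apply, map_mul, pow_add]
    ring
  have hGmono : Monotone G := by
    intro m n hmn
    show (⨆ i ∈ Finset.Icc 1 m, f i) ≤ ⨆ i ∈ Finset.Icc 1 n, f i
    refine biSup_mono fun i hi => Finset.mem_Icc.mpr ?_
    have := Finset.mem_Icc.mp hi
    omega
  have hfG : ∀ i n, f i * G n ≤ G (i + n) := by
    intro i n
    show f i * (⨆ j ∈ Finset.Icc 1 n, f j) ≤ G (i + n)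
    rw [Submodule.mul_iSup]
    refine iSup_le fun j => ?_
    rw [Submodule.mul_iSup]
    refine iSup_le fun hj => ?_
    refine le_trans (hfmul i j) ?_
    have hij : i + j ∈ Finset.Icc 1 (i + n) := by
      have := Finset.mem_Icc.mp hj
      exact Finset.mem_Icc.mpr (by omega)
    exact le_biSup f hij
  have hGmul : ∀ m n, G m * G n ≤ G (m + n) := by
    intro m n
    show (⨆ i ∈ Finset.Icc 1 m, f i) * G n ≤ G (m + n)
    rw [Submodule.iSup_mul]
    refine iSup_le fun i => ?_
    rw [Submodule.iSup_mul]
    refine iSup_le fun hi => ?_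
    refine le_trans (hfG i n) (hGmono ?_)
    have := Finset.mem_Icc.mp hi
    omega
  have hf0G : ∀ n, f 0 * G n ≤ G n := fun n => by simpa using hfG 0 n
  have hf0f0 : f 0 * f 0 ≤ f 0 := by simpa using hfmul 0 0
  have hHG : ∀ m n, H m * G n ≤ G (m + n) := by
    intro m n
    show (f 0 ⊔ G m) * G n ≤ G (m + n)
    rw [Submodule.sup_mul]
    exact sup_le (le_trans (hf0G n) (hGmono (by omega))) (hGmul m n)
  have hHH : ∀ m n, H m * H n ≤ H (m + n) := by
    intro m n
    show (f 0 ⊔ G m) * (f 0 ⊔ G n) ≤ f 0 ⊔ G (m + n)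
    rw [Submodule.sup_mul, Submodule.mul_sup, Submodule.mul_sup]
    refine sup_le (sup_le ?_ ?_) (sup_le ?_ ?_)
    · exact le_trans hf0f0 le_sup_left
    · exact le_trans (hf0G n) (le_trans (hGmono (by omega)) le_sup_right)
    · refine le_trans (le_of_eq (Submodule.mul_comm (G m) (f 0))) ?_
      exact le_trans (hf0G m) (le_trans (hGmono (by omega)) le_sup_right)
    · exact le_trans (hGmul m n) le_sup_right
  have hHmono : Monotone H := by
    intro m n hmn
    show f 0 ⊔ G m ≤ f 0 ⊔ G n
    exact sup_le_sup_left (hGmono hmn) _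
  -- basic memberships
  have hDf0 : ∀ d : D, φ d ∈ f 0 := by
    intro d
    refine Submodule.mem_map.mpr ⟨d, by simp, ?_⟩
    simp
    rfl
  have hTf1 : ∀ t ∈ T, t ∈ f 1 := by
    rintro t ⟨a, ha, rfl⟩
    refine Submodule.mem_map.mpr ⟨a, by simpa using ha, ?_⟩
    simp
    exact Or.inl rfl
  have hf1G1 : f 1 ≤ G 1 := le_biSup f (Finset.mem_Icc.mpr (by omega))
  -- the ring S
  set S : Subring K := Subring.closure (Set.range φ ∪ T) with hS
  have hDS : ∀ d : D, φ d ∈ S := fun d => Subring.subset_closure (Or.inl ⟨d, rfl⟩)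
  have hTS : ∀ t ∈ T, t ∈ S := fun t ht => Subring.subset_closure (Or.inr ht)
  have hSH : ∀ s : K, s ∈ Subring.closure (Set.range φ ∪ T) → ∃ n, s ∈ H n := by
    intro s hs'
    induction hs' using Subring.closure_induction with
    | mem z hz =>
      rcases hz with ⟨d, rfl⟩ | hz
      · exact ⟨0, Submodule.mem_sup_left (hDf0 d)⟩
      · exact ⟨1, Submodule.mem_sup_right (hf1G1 (hTf1 z hz))⟩
    | zero => exact ⟨0, zero_mem _⟩
    | one => exact ⟨0, Submodule.mem_sup_left (by simpa using hDf0 1)⟩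
    | add a b ha hb iha ihb =>
      obtain ⟨m, hm⟩ := iha
      obtain ⟨n, hn⟩ := ihb
      exact ⟨max m n, add_mem (hHmono (le_max_left m n) hm) (hHmono (le_max_right m n) hn)⟩
    | neg a ha iha =>
      obtain ⟨m, hm⟩ := iha
      exact ⟨m, neg_mem hm⟩
    | mul a b ha hb iha ihb =>
      obtain ⟨m, hm⟩ := iha
      obtain ⟨n, hn⟩ := ihb
      exact ⟨m + n, hHH m n (Submodule.mul_mem_mul hm hn)⟩
  -- the ideal J
  set J : Ideal S := Ideal.span {s : S | (s : K) ∈ T} with hJ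
  have hJG : ∀ s ∈ J, ∃ n, (s : K) ∈ G n := by
    intro s hs
    have hs' : s ∈ Submodule.span S {s : S | (s : K) ∈ T} := hs
    clear hs
    induction hs' using Submodule.span_induction with
    | mem z hz => exact ⟨1, hf1G1 (hTf1 _ hz)⟩
    | zero => exact ⟨0, zero_mem _⟩
    | add a b ha hb iha ihb =>
      obtain ⟨m, hm⟩ := iha
      obtain ⟨n, hn⟩ := ihb
      exact ⟨max m n, add_mem (hGmono (le_max_left m n) hm) (hGmono (le_max_right m n) hn)⟩
    | smul r a ha iha =>
      obtain ⟨n, hn⟩ := iha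
      obtain ⟨m, hm⟩ := hSH (r : K) r.2
      exact ⟨m + n, hHG m n (Submodule.mul_mem_mul hm hn)⟩
  by_cases hJtop : J = ⊤
  · -- 1 ∈ J : extract the integral equation
    have h1 : (1 : S) ∈ J := hJtop ▸ Submodule.mem_top
    obtain ⟨N, hN⟩ := hJG 1 h1
    have hN' : (((1 : S) : K)) ∈ ⨆ i ∈ Finset.Icc 1 N, f i := hN
    rw [Submodule.mem_iSup_finset_iff_exists_sum] at hN'
    obtain ⟨μ, hμ⟩ := hN'
    have hμ1 : ∑ i ∈ Finset.Icc 1 N, ((μ i : K)) = 1 := by simpa using hμ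
    have hmem : ∀ i : ℕ, ((μ i : K)) ∈ f i := fun i => (μ i).2
    choose b hbI hbeq using fun i => Submodule.mem_map.mp (hmem i)
    have hN0 : 0 < N := by
      by_contra hN0
      have hN00 : N = 0 := by omega
      subst hN00
      rw [show Finset.Icc 1 0 = (∅ : Finset ℕ) from Finset.Icc_eq_empty (by omega)] at hμ1
      simp at hμ1
    refine ⟨N, hN0, fun i => -(b i), fun i hi => neg_mem (hbI i), ?_⟩
    have hterm : ∀ i ∈ Finset.Icc 1 N, φ (-(b i)) * x ^ (N - i) = -((μ i : K) * x ^ N) := by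
      intro i hi
      rw [Finset.mem_Icc] at hi
      have hxi : x ^ i ≠ 0 := pow_ne_zero _ hx
      have hpow : x ^ (N - i) = y ^ i * x ^ N := by
        rw [hy, inv_pow, eq_inv_mul_iff_mul_eq₀ hxi, ← pow_add]
        congr 1
        omega
      rw [map_neg, ← hbeq i, stmt4.smulAlg_apply, hpow]
      ring
    rw [Finset.sum_congr rfl hterm, Finset.sum_neg_distrib, ← Finset.sum_mul, hμ1, one_mul,
      add_neg_cancel]
  · -- J proper : dominate by a valuation ring and contradict
    exfalso
    obtain ⟨m, hmmax, hJm⟩ := Ideal.exists_le_maximal J hJtop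
    haveI := hmmax.isPrime
    obtain ⟨V, hV⟩ := (LocalSubring.ofPrime S m).exists_le_valuationSubring
    have hSV : ∀ s : S, (s : K) ∈ V := fun s =>
      hV.1 (LocalSubring.le_ofPrime S m s.2)
    have hDV : ∀ d : D, φ d ∈ V := fun d => hSV ⟨φ d, hDS d⟩
    -- elements of m are nonunits in V
    have hmV : ∀ t : S, t ∈ m → ¬ IsUnit (⟨(t : K), hSV t⟩ : V) := by
      intro t htm hu
      have hnu : ¬ IsUnit (algebraMap S (LocalSubring.ofPrime S m).toSubring t) := by
        rw [IsLocalization.AtPrime.isUnit_to_map_iff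
          (LocalSubring.ofPrime S m).toSubring m t]
        exact fun hc => hc htm
      apply hnu
      haveI := hV.2
      refine (hV.2).1 (a := Subring.inclusion (LocalSubring.le_ofPrime S m) t) ?_
      exact hu
    -- use the hypothesis for V
    have hxV := h V hDV
    rw [Submodule.mem_span_set'] at hxV
    obtain ⟨n, fc, g, hg⟩ := hxV
    -- each y * g i lies in T hence in m
    have hgT : ∀ i, y * ((g i : K)) ∈ T := by
      intro i
      obtain ⟨a, ha, hag⟩ := (g i).2
      exact ⟨a, ha, by dsimp only; rw [hag]⟩
    have hgm : ∀ i, (⟨y * (g i : K), hTS _ (hgT i)⟩ : S) ∈ m := fun i =>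
      hJm (Ideal.subset_span (hgT i))
    have h1V : (1 : V) = ∑ i : Fin n, fc i * ⟨y * (g i : K), hSV ⟨_, hTS _ (hgT i)⟩⟩ := by
      apply Subtype.ext
      push_cast
      have h2 : ∑ i : Fin n, (fc i : K) * (y * (g i : K)) = y * ∑ i : Fin n, (fc i : K) * (g i : K) := by
        rw [Finset.mul_sum]
        exact Finset.sum_congr rfl fun i _ => by ring
      rw [h2]
      have hgg : ∑ i : Fin n, (fc i : K) * (g i : K) = x := by
        rw [← hg]
        exact Finset.sum_congr rfl fun i _ => rfl
      rw [hgg, hy, inv_mul_cancel₀ hx]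
    have hmem1 : (1 : V) ∈ IsLocalRing.maximalIdeal V := by
      rw [h1V]
      refine Ideal.sum_mem _ fun i _ => Ideal.mul_mem_left _ _ ?_
      rw [IsLocalRing.mem_maximalIdeal, mem_nonunits_iff]
      exact hmV ⟨y * (g i : K), hTS _ (hgT i)⟩ (hgm i)
    exact (IsLocalRing.maximalIdeal.isMaximal V).ne_top
      (Ideal.eq_top_of_isUnit_mem _ hmem1 isUnit_one)
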